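/- Thread extraction of a finite instruction sequence terminates: for every closed repetition-free PGA term t, rewriting ⟨|t|⟩ using the thread-extraction rules TE1–TE13 (oriented left to right) yields, after finitely many steps, a closed BTA term (built from inaction D, termination S, and postconditional composition). -/
import Mathlib


/-- Primitive instructions over a set `A` of basic instructions: plain
basic instructions, positive and negative tests, forward jumps, and the
termination instruction. -/
inductive PInstr (A : Type) where
  | basic : A → PInstr A
  | ptst : A → PInstr A
  | ntst : A → PInstr A
  | jmp : ℕ → PInstr A
  | halt : PInstr A

/-- Closed BTA terms over basic actions `A`: inaction `D`, termination `S`,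
and postconditional composition. -/
inductive BTA (A : Type) where
  | D : BTA A
  | S : BTA A
  | pcc : BTA A → A → BTA A → BTA A

open PInstr BTA

/-- Thread extraction (rules TE1–TE13) as a relation between non-empty
finite instruction sequences (lists of primitive instructions) and closed
BTA terms.  `a ∘ x` is `x ◁ a ▷ x`, i.e. `pcc x a x`. -/
inductive Extract {A : Type} : List (PInstr A) → BTA A → Prop where
  | te1 (a : A) : Extract [basic a] (pcc D a D)
  | te2 (a : A) {X : List (PInstr A)} {x : BTA A} :
      X ≠ [] → Extract X x → Extract (basic a :: X) (pcc x a x)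
  | te3 (a : A) : Extract [ptst a] (pcc D a D)
  | te4 (a : A) {X : List (PInstr A)} {x y : BTA A} :
      X ≠ [] → Extract X x → Extract (jmp 2 :: X) y →
      Extract (ptst a :: X) (pcc x a y)
  | te5 (a : A) : Extract [ntst a] (pcc D a D)
  | te6 (a : A) {X : List (PInstr A)} {x y : BTA A} :
      X ≠ [] → Extract X x → Extract (jmp 2 :: X) y →
      Extract (ntst a :: X) (pcc y a x)
  | te7 (l : ℕ) : Extract [jmp l] D
  | te8 {X : List (PInstr A)} : X ≠ [] → Extract (jmp 0 :: X) D
  | te9 {X : List (PInstr A)} {x : BTA A} :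
      X ≠ [] → Extract X x → Extract (jmp 1 :: X) x
  | te10 (l : ℕ) (u : PInstr A) : Extract [jmp (l + 2), u] D
  | te11 (l : ℕ) (u : PInstr A) {X : List (PInstr A)} {x : BTA A} :
      X ≠ [] → Extract (jmp (l + 1) :: X) x →
      Extract (jmp (l + 2) :: u :: X) x
  | te12 : Extract [(halt : PInstr A)] S
  | te13 {X : List (PInstr A)} : X ≠ [] → Extract (halt :: X) S


private def headCost {A : Type} : PInstr A → ℕ
  | ptst _ => 1
  | ntst _ => 1
  | _ => 0

private def wt {A : Type} : List (PInstr A) → ℕ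
  | [] => 0
  | u :: X => 2 * (X.length + 1) + headCost u

private lemma extract_aux {A : Type} :
    ∀ (n : ℕ) (t : List (PInstr A)), wt t ≤ n → t ≠ [] → ∃ b : BTA A, Extract t b := by
  intro n
  induction n with
  | zero =>
    intro t hw ht
    cases t with
    | nil => exact absurd rfl ht
    | cons u X => simp [wt] at hw
  | succ n ih =>
    intro t hw ht
    cases t with
    | nil => exact absurd rfl ht
    | cons u X =>
      cases u with
      | basic a =>
        cases X with
        | nil => exact ⟨_, Extract.te1 a⟩
        | cons v Y =>
          obtain ⟨x, hx⟩ := ih (v :: Y) (by simp [wt, headCost] at hw ⊢; cases v <;> simp [headCost] <;> omega) (by simp)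
          exact ⟨_, Extract.te2 a (by simp) hx⟩
      | ptst a =>
        cases X with
        | nil => exact ⟨_, Extract.te3 a⟩
        | cons v Y =>
          obtain ⟨x, hx⟩ := ih (v :: Y) (by simp [wt, headCost] at hw ⊢; cases v <;> simp [headCost] <;> omega) (by simp)
          obtain ⟨y, hy⟩ := ih (jmp 2 :: v :: Y) (by simp [wt, headCost] at hw ⊢; omega) (by simp)
          exact ⟨_, Extract.te4 a (by simp) hx hy⟩
      | ntst a =>
        cases X with
        | nil => exact ⟨_, Extract.te5 a⟩
        | cons v Y =>
          obtain ⟨x, hx⟩ := ih (v :: Y) (by simp [wt, headCost] at hw ⊢; cases v <;> simp [headCost] <;> omega) (by simp)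
          obtain ⟨y, hy⟩ := ih (jmp 2 :: v :: Y) (by simp [wt, headCost] at hw ⊢; omega) (by simp)
          exact ⟨_, Extract.te6 a (by simp) hx hy⟩
      | jmp l =>
        cases X with
        | nil => exact ⟨_, Extract.te7 l⟩
        | cons v Y =>
          match l with
          | 0 => exact ⟨_, Extract.te8 (by simp)⟩
          | 1 =>
            obtain ⟨x, hx⟩ := ih (v :: Y) (by simp [wt, headCost] at hw ⊢; cases v <;> simp [headCost] <;> omega) (by simp)
            exact ⟨_, Extract.te9 (by simp) hx⟩
          | l + 2 =>
            cases Y with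
            | nil => exact ⟨_, Extract.te10 l v⟩
            | cons w Z =>
              obtain ⟨x, hx⟩ := ih (jmp (l + 1) :: w :: Z) (by simp [wt, headCost] at hw ⊢; omega) (by simp)
              exact ⟨_, Extract.te11 l v (by simp) hx⟩
      | halt =>
        cases X with
        | nil => exact ⟨_, Extract.te12⟩
        | cons v Y => exact ⟨_, Extract.te13 (by simp)⟩

/-- Thread extraction of a finite instruction sequence terminates: for
every non-empty finite instruction sequence, rewriting with TE1–TE13
yields (in finitely many steps) a closed BTA term. -/
theorem extract_total {A : Type} (t : List (PInstr A)) (h : t ≠ []) :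
    ∃ b : BTA A, Extract t b := by
  exact extract_aux (wt t) t le_rfl h
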